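/- With the hypotheses of the totally ramified case ($A$ a DVR of characteristic $p$, $M$-graded with $N = \{0\}$, $d \in M$ with $v(e_d) = 1$): the element $d$ generates $M$ as an abelian group, and for every $m \in M$ one has $m = v(e_m) \cdot d$ and $e_m = u \, e_d^{v(e_m)}$ for some unit $u \in A_0^\times$. In particular $e_d$ generates $A$ as an $A_0$-algebra. -/

import Mathlib

/-- totally ramified case: if `v (e_d) = 1` then `d` generates `M`,
every `m` equals `v (eₘ) • d`, each `eₘ` is a unit of `A₀` times `e_d ^ v (eₘ)`,
and `e_d` generates `A` as an `A₀`-algebra. -/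
theorem stmt5 {A₀ A : Type*} [CommRing A₀] [CommRing A] [IsDomain A]
    [IsDiscreteValuationRing A] [Algebra A₀ A]
    {M : Type*} [AddCommGroup M] [Fintype M]
    {p k : ℕ} [Fact p.Prime] [CharP A p]
    (hcard : Fintype.card M = p ^ k)
    (e : M → A) (α : M → M → A₀)
    (b : Module.Basis M A₀ A) (hb : ∀ m, b m = e m) (he0 : e 0 = 1)
    (hmul : ∀ m n, e m * e n = algebraMap A₀ A (α m n) * e (m + n))
    (hreg : ∀ m n, α m n ∈ nonZeroDivisors A₀)
    (hN : ∀ n, IsUnit (e n) → n = 0)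
    (d : M) (hd : IsDiscreteValuationRing.addVal A (e d) = 1) :
    AddSubgroup.zmultiples d = ⊤ ∧
      (∀ m, ∃ (j : ℕ) (u : A₀ˣ),
        IsDiscreteValuationRing.addVal A (e m) = j ∧ m = j • d ∧
          e m = algebraMap A₀ A u * e d ^ j) ∧
      Algebra.adjoin A₀ {e d} = ⊤ := by
  classical
  haveI : Nontrivial A₀ := ⟨1, 0, fun h => one_ne_zero (α := A) (by
    rw [← (algebraMap A₀ A).map_one, h, map_zero])⟩
  have hed0 : e d ≠ 0 := by
    intro h
    rw [h, IsDiscreteValuationRing.addVal_zero] at hd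
    simp at hd
  obtain ⟨ϖ, hϖ⟩ := IsDiscreteValuationRing.exists_irreducible A
  obtain ⟨n, w, hw⟩ := IsDiscreteValuationRing.eq_unit_mul_pow_irreducible hed0 hϖ
  have hn1 : n = 1 := by
    have := IsDiscreteValuationRing.addVal_def _ w hϖ n hw
    rw [hd] at this
    exact_mod_cast this.symm
  subst hn1
  rw [pow_one] at hw
  have hedirr : Irreducible (e d) :=
    (Associated.irreducible ⟨w, by rw [hw, mul_comm]⟩ hϖ : _)
  -- the cocycle for multiplying by powers of `e d`
  have hgamma : ∀ (j : ℕ) (n : M), ∃ γ ∈ nonZeroDivisors A₀,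
      e n * e d ^ j = algebraMap A₀ A γ * e (n + j • d) := by
    intro j
    induction j with
    | zero => exact fun n => ⟨1, one_mem _, by simp⟩
    | succ j ih =>
      intro n
      obtain ⟨γ, hγ, hγe⟩ := ih n
      refine ⟨γ * α (n + j • d) d, mul_mem hγ (hreg _ _), ?_⟩
      have hind : n + (j + 1) • d = n + j • d + d := by
        rw [succ_nsmul, add_assoc]
      rw [pow_succ, ← mul_assoc, hγe, mul_assoc, hmul, map_mul, hind]
      ring
  -- the key pointwise statement
  have key : ∀ m : M, ∃ (j : ℕ) (u : A₀ˣ),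
      IsDiscreteValuationRing.addVal A (e m) = j ∧ m = j • d ∧
        e m = algebraMap A₀ A u * e d ^ j := by
    intro m
    have hem0 : e m ≠ 0 := hb m ▸ b.ne_zero m
    obtain ⟨j, x, hx⟩ := IsDiscreteValuationRing.eq_unit_mul_pow_irreducible hem0 hedirr
    set c : M → A₀ := fun n => b.repr (x : A) n with hc
    have hxsum : (x : A) = ∑ n, c n • e n := by
      conv_lhs => rw [← b.sum_repr (x : A)]
      exact Finset.sum_congr rfl fun n _ => by rw [hb]
    choose γ hγmem hγ using hgamma j
    have hsum2 : e m = ∑ n, (c (n - j • d) * γ (n - j • d)) • b n := by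
      rw [hx, hxsum, Finset.sum_mul,
        ← Equiv.sum_comp (Equiv.addRight (j • d))
          (fun n => (c (n - j • d) * γ (n - j • d)) • b n)]
      refine Finset.sum_congr rfl fun n _ => ?_
      simp only [Equiv.coe_addRight, add_sub_cancel_right, hb, Algebra.smul_def, map_mul]
      rw [mul_assoc, hγ n, ← mul_assoc]
    have hrepr : ∀ n, (if m = n then (1 : A₀) else 0) = c (n - j • d) * γ (n - j • d) := by
      intro n
      have h1 : b.repr (e m) n = c (n - j • d) * γ (n - j • d) := by
        rw [hsum2]
        exact congrFun (b.repr_sum_self _) n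
      rw [← h1, ← hb, Module.Basis.repr_self_apply]
    have hczero : ∀ n', n' ≠ m - j • d → c n' = 0 := by
      intro n' hne
      have h := hrepr (n' + j • d)
      rw [add_sub_cancel_right,
        if_neg (fun hh => hne (by rw [hh, add_sub_cancel_right]))] at h
      exact ((mem_nonZeroDivisors_iff.mp (hγmem n')).2 (c n') h.symm)
    have hxval : (x : A) = c (m - j • d) • e (m - j • d) := by
      rw [hxsum]
      rw [Finset.sum_eq_single (m - j • d)]
      · intro n _ hne; rw [hczero n hne, zero_smul]
      · intro h; exact absurd (Finset.mem_univ _) h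
    have hunit : IsUnit (e (m - j • d)) := by
      refine isUnit_of_dvd_unit ⟨algebraMap A₀ A (c (m - j • d)), ?_⟩ x.isUnit
      rw [hxval, Algebra.smul_def, mul_comm]
    have hm0 : m - j • d = 0 := hN _ hunit
    have hmd : m = j • d := by rwa [sub_eq_zero] at hm0
    have hxalg : (x : A) = algebraMap A₀ A (c 0) := by
      rw [hxval, hm0, he0, Algebra.smul_def, mul_one]
    have hc0unit : IsUnit (c 0) := by
      have h1 : algebraMap A₀ A (c 0) * (↑x⁻¹ : A) = 1 := by
        rw [← hxalg]; exact x.mul_inv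
      rw [← Algebra.smul_def] at h1
      have h2 := congrArg (fun z => b.repr z 0) h1
      have h3 : b.repr (1 : A) 0 = 1 := by
        rw [show (1 : A) = b 0 by rw [hb, he0], Module.Basis.repr_self_apply, if_pos rfl]
      simp only [map_smul, Finsupp.smul_apply, smul_eq_mul, h3] at h2
      exact IsUnit.of_mul_eq_one _ h2
    refine ⟨j, hc0unit.unit, ?_, hmd, ?_⟩
    · exact IsDiscreteValuationRing.addVal_def _ x hedirr j hx
    · rw [IsUnit.unit_spec, ← hxalg, hx]
  refine ⟨?_, key, ?_⟩
  · rw [eq_top_iff]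
    intro m _
    obtain ⟨j, u, -, hmd, -⟩ := key m
    exact ⟨(j : ℤ), by simpa using hmd.symm⟩
  · rw [eq_top_iff]
    intro x _
    rw [← b.sum_repr x]
    refine Subalgebra.sum_mem _ fun m _ => ?_
    rw [hb]
    obtain ⟨j, u, -, -, hu⟩ := key m
    rw [hu]
    exact Subalgebra.smul_mem _ (mul_mem (Subalgebra.algebraMap_mem _ _)
      (Subalgebra.pow_mem _ (Algebra.subset_adjoin (Set.mem_singleton _)) j)) _
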